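/- If Γ = {γ_{mn}} is a d-regular sequence, then the partial sums S(R) = Σ_{0 < |λ_{mn}| ≤ R} |d/λ_{mn} − 1/γ_{mn}| satisfy S(R) = o(R) as R → ∞, i.e. S(R)/R → 0 as R → ∞. -/

import Mathlib

open Complex MeasureTheory Filter

/-- The integer lattice point `λ_{mn} = m + i n`. -/
noncomputable def latticePt (p : ℤ × ℤ) : ℂ := (p.1 : ℂ) + (p.2 : ℂ) * Complex.I

/-- A sequence `Γ = {γ_{mn}}` is `d`-regular if there are `c > 0` and
`φ : [1,∞) → ℝ` with `φ(t)/t` non-increasing, `∫₁^∞ φ(t)/t² dt < ∞`, such that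
`|λ_{mn} - d γ_{mn}| ≤ φ(|λ_{mn}|)` and `|γ_{mn} - γ_{m'n'}| ≥ c |λ_{mn} - λ_{m'n'}|`. -/
def DRegular (d : ℝ) (γ : ℤ × ℤ → ℂ) : Prop :=
  ∃ c : ℝ, 0 < c ∧ ∃ φ : ℝ → ℝ,
    (∀ s t : ℝ, 1 ≤ s → s ≤ t → φ t / t ≤ φ s / s) ∧
    MeasureTheory.IntegrableOn (fun t : ℝ => φ t / t ^ 2) (Set.Ici 1) ∧
    (∀ p : ℤ × ℤ, ‖latticePt p - (d : ℂ) * γ p‖ ≤ φ ‖latticePt p‖) ∧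
    (∀ p q : ℤ × ℤ, c * ‖latticePt p - latticePt q‖ ≤ ‖γ p - γ q‖)
/-- max of absolute values of coordinates -/
def maxN (p : ℤ × ℤ) : ℕ := max p.1.natAbs p.2.natAbs

lemma latticePt_re (p : ℤ × ℤ) : (latticePt p).re = p.1 := by simp [latticePt]
lemma latticePt_im (p : ℤ × ℤ) : (latticePt p).im = p.2 := by simp [latticePt]

lemma latticePt_ne_zero {p : ℤ × ℤ} (hp : p ≠ (0,0)) : latticePt p ≠ 0 := by
  intro h
  apply hp
  have h1 := latticePt_re p
  have h2 := latticePt_im p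
  rw [h] at h1 h2
  simp at h1 h2
  exact Prod.ext (by exact_mod_cast h1.symm) (by exact_mod_cast h2.symm)

lemma maxN_le_abs (p : ℤ × ℤ) : (maxN p : ℝ) ≤ ‖latticePt p‖ := by
  have h1 : |(p.1 : ℝ)| ≤ ‖latticePt p‖ := by
    have := Complex.abs_re_le_norm (latticePt p); rwa [latticePt_re] at this
  have h2 : |(p.2 : ℝ)| ≤ ‖latticePt p‖ := by
    have := Complex.abs_im_le_norm (latticePt p); rwa [latticePt_im] at this
  have e1 : ((p.1.natAbs : ℕ) : ℝ) = |(p.1 : ℝ)| := by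
    rw [Nat.cast_natAbs]; push_cast; ring
  have e2 : ((p.2.natAbs : ℕ) : ℝ) = |(p.2 : ℝ)| := by
    rw [Nat.cast_natAbs]; push_cast; ring
  rw [maxN, Nat.cast_max, e1, e2]
  exact max_le h1 h2

lemma one_le_maxN {p : ℤ × ℤ} (hp : p ≠ (0,0)) : 1 ≤ maxN p := by
  rcases Nat.eq_zero_or_pos (maxN p) with h | h
  · exfalso; apply hp
    rw [maxN] at h
    have h1 : p.1.natAbs = 0 := by omega
    have h2 : p.2.natAbs = 0 := by omega
    exact Prod.ext (by omega) (by omega)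
  · exact h

lemma one_le_abs_latticePt {p : ℤ × ℤ} (hp : p ≠ (0,0)) :
    1 ≤ ‖latticePt p‖ := by
  have := maxN_le_abs p
  have h1 := one_le_maxN hp
  have : (1 : ℝ) ≤ (maxN p : ℝ) := by exact_mod_cast h1
  linarith [maxN_le_abs p]

lemma abs_latticePt_nat (M : ℕ) : ‖latticePt ((M : ℤ), 0)‖ = M := by
  simp [latticePt]

/-- the shell of lattice points with sup-norm exactly k -/
noncomputable def shellF (k : ℕ) : Finset (ℤ × ℤ) :=
  Finset.filter (fun p => maxN p = k) (Finset.Icc (-(k:ℤ), -(k:ℤ)) ((k:ℤ), (k:ℤ)))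

lemma mem_shellF {p : ℤ × ℤ} {k : ℕ} : p ∈ shellF k ↔ maxN p = k := by
  rw [shellF, Finset.mem_filter, Finset.mem_Icc]
  constructor
  · exact fun h => h.2
  · intro h
    refine ⟨⟨?_, ?_⟩, h⟩ <;> rw [Prod.le_def] <;> constructor <;>
      · simp only [maxN] at h; omega

lemma card_shellF {k : ℕ} (hk : 1 ≤ k) : (shellF k).card ≤ 12 * k := by
  have hsub : shellF k ⊆
      (({-(k:ℤ), (k:ℤ)} : Finset ℤ) ×ˢ Finset.Icc (-(k:ℤ)) (k:ℤ)) ∪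
      (Finset.Icc (-(k:ℤ)) (k:ℤ) ×ˢ ({-(k:ℤ), (k:ℤ)} : Finset ℤ)) := by
    intro p hp
    rw [mem_shellF] at hp
    simp only [maxN] at hp
    simp only [Finset.mem_union, Finset.mem_product, Finset.mem_insert,
      Finset.mem_singleton, Finset.mem_Icc]
    omega
  have hcard := Finset.card_le_card hsub
  have h1 : (({-(k:ℤ), (k:ℤ)} : Finset ℤ)).card ≤ 2 := by
    apply le_trans (Finset.card_insert_le _ _); simp
  have h2 : (Finset.Icc (-(k:ℤ)) (k:ℤ)).card = 2 * k + 1 := by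
    rw [Int.card_Icc]; omega
  calc (shellF k).card ≤ _ := hcard
    _ ≤ (({-(k:ℤ), (k:ℤ)} : Finset ℤ) ×ˢ Finset.Icc (-(k:ℤ)) (k:ℤ)).card +
        (Finset.Icc (-(k:ℤ)) (k:ℤ) ×ˢ ({-(k:ℤ), (k:ℤ)} : Finset ℤ)).card :=
      Finset.card_union_le _ _
    _ ≤ 2 * (2 * k + 1) + (2 * k + 1) * 2 := by
      rw [Finset.card_product, Finset.card_product, h2]
      gcongr
    _ ≤ 12 * k := by omega

section phi
variable {φ : ℝ → ℝ}

/-- nonnegativity of φ(t)/t given monotonicity and a lower bound at lattice points -/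
lemma phi_div_nonneg (hmono : ∀ s t : ℝ, 1 ≤ s → s ≤ t → φ t / t ≤ φ s / s)
    (hpos : ∀ n : ℕ, 1 ≤ n → 0 ≤ φ n) :
    ∀ t : ℝ, 1 ≤ t → 0 ≤ φ t / t := by
  intro t ht
  set M : ℕ := ⌈t⌉₊ with hM
  have hM1 : 1 ≤ M := by
    rw [hM]; exact Nat.one_le_ceil_iff.mpr (by linarith)
  have htM : t ≤ (M : ℝ) := Nat.le_ceil t
  have h1 : 0 ≤ φ (M : ℝ) := hpos M hM1
  have h2 : φ (M : ℝ) / (M : ℝ) ≤ φ t / t := hmono t (M : ℝ) ht htM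
  have hMpos : (0:ℝ) < M := by exact_mod_cast hM1
  have : 0 ≤ φ (M : ℝ) / (M : ℝ) := div_nonneg h1 hMpos.le
  linarith

lemma phi_div_tendsto (hmono : ∀ s t : ℝ, 1 ≤ s → s ≤ t → φ t / t ≤ φ s / s)
    (hint : MeasureTheory.IntegrableOn (fun t : ℝ => φ t / t ^ 2) (Set.Ici 1)) :
    ∀ ε : ℝ, 0 < ε → ∃ T : ℝ, 1 ≤ T ∧ ∀ t, T ≤ t → φ t / t ≤ ε := by
  intro ε hε
  by_contra hcon
  push_neg at hcon
  have hall : ∀ s : ℝ, 1 ≤ s → ε ≤ φ s / s := by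
    intro s hs
    obtain ⟨t, hts, hεt⟩ := hcon s hs
    exact le_trans hεt.le (hmono s t hs hts)
  have hint2 : IntegrableOn (fun s : ℝ => ε / s) (Set.Ici 1) := by
    apply Integrable.mono' hint
    · exact (measurable_const.div measurable_id).aestronglyMeasurable
    · filter_upwards [ae_restrict_mem measurableSet_Ici] with s hs
      have hs1 : (1:ℝ) ≤ s := hs
      have hspos : (0:ℝ) < s := lt_of_lt_of_le zero_lt_one hs1
      rw [Real.norm_eq_abs, _root_.abs_of_nonneg (div_nonneg hε.le hspos.le)]
      have h := hall s hs1
      have : φ s / s ^ 2 = (φ s / s) / s := by rw [div_div, sq]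
      rw [this]
      gcongr
  have hint3 : IntegrableOn (fun s : ℝ => s ^ (-1 : ℝ)) (Set.Ioi 1) := by
    have h4 : IntegrableOn (fun s : ℝ => ε⁻¹ * (ε / s)) (Set.Ioi 1) :=
      (hint2.mono_set Set.Ioi_subset_Ici_self).const_mul ε⁻¹
    apply h4.congr_fun ?_ measurableSet_Ioi
    intro x hx
    have hxpos : (0:ℝ) < x := lt_trans zero_lt_one hx
    show ε⁻¹ * (ε / x) = x ^ (-1 : ℝ)
    rw [Real.rpow_neg_one]
    field_simp
  rw [integrableOn_Ioi_rpow_iff zero_lt_one] at hint3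
  linarith

end phi

lemma term_bound {d : ℝ} (hd : 0 < d) {φ : ℝ → ℝ} {γ : ℤ × ℤ → ℂ}
    (hmono : ∀ s t : ℝ, 1 ≤ s → s ≤ t → φ t / t ≤ φ s / s)
    (hφ : ∀ p : ℤ × ℤ, ‖latticePt p - (d : ℂ) * γ p‖ ≤ φ (‖latticePt p‖))
    {p : ℤ × ℤ} (hp : p ≠ (0,0))
    (hhalf : φ (‖latticePt p‖) / (‖latticePt p‖) ≤ 1/2) :
    ‖(d : ℂ) / latticePt p - 1 / γ p‖ ≤
      2 * d * (φ (maxN p) / (maxN p)) / (maxN p) := by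
  set L := ‖latticePt p‖ with hLdef
  have hL1 : 1 ≤ L := one_le_abs_latticePt hp
  have hLpos : (0:ℝ) < L := lt_of_lt_of_le zero_lt_one hL1
  have hlamne : latticePt p ≠ 0 := latticePt_ne_zero hp
  have hφL : ‖latticePt p - (d:ℂ) * γ p‖ ≤ φ L := hφ p
  have hφnn : 0 ≤ φ L := le_trans (norm_nonneg _) hφL
  have hφhalf : φ L ≤ L / 2 := by
    have := (div_le_iff₀ hLpos).mp hhalf; linarith
  have htri : L ≤ ‖latticePt p - (d:ℂ)*γ p‖ + ‖(d:ℂ)*γ p‖ := by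
    have : latticePt p = (latticePt p - (d:ℂ)*γ p) + (d:ℂ)*γ p := by ring
    calc L = ‖(latticePt p - (d:ℂ)*γ p) + (d:ℂ)*γ p‖ := by rw [hLdef, ← this]
      _ ≤ _ := norm_add_le _ _
  have hdγ : L / 2 ≤ ‖(d:ℂ) * γ p‖ := by linarith
  have habsmul : ‖(d:ℂ)*γ p‖ = d * ‖γ p‖ := by
    rw [norm_mul, Complex.norm_real, Real.norm_eq_abs, _root_.abs_of_pos hd]
  have hγabs : L/(2*d) ≤ ‖γ p‖ := by
    rw [habsmul] at hdγ
    rw [div_le_iff₀ (by positivity)]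
    nlinarith
  have hγpos : (0:ℝ) < ‖γ p‖ :=
    lt_of_lt_of_le (by positivity) hγabs
  have hγne : γ p ≠ 0 := by
    intro h; rw [h] at hγpos; simp at hγpos
  have hdiff : (d:ℂ)/latticePt p - 1/γ p = -((latticePt p - (d:ℂ)*γ p)/(latticePt p * γ p)) := by
    field_simp
    ring
  rw [hdiff, norm_neg, norm_div, norm_mul, ← hLdef]
  set j : ℝ := (maxN p : ℝ) with hjdef
  have hj1 : (1:ℝ) ≤ j := by
    rw [hjdef]; exact_mod_cast one_le_maxN hp
  have hjL : j ≤ L := maxN_le_abs p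
  have hjpos : (0:ℝ) < j := lt_of_lt_of_le zero_lt_one hj1
  have hmono2 : φ L / L ≤ φ j / j := hmono j L hj1 hjL
  have hφjnn : 0 ≤ φ j / j := le_trans (div_nonneg (le_trans (norm_nonneg _) hφL) hLpos.le) hmono2
  calc ‖latticePt p - (d:ℂ)*γ p‖ / (L * ‖γ p‖)
      ≤ φ L / (L * (L/(2*d))) :=
        div_le_div₀ hφnn hφL (by positivity) (by gcongr)
    _ = 2 * d * (φ L / L) / L := by
        field_simp
    _ ≤ 2 * d * (φ j / j) / L := by gcongr
    _ ≤ 2 * d * (φ j / j) / j := by gcongr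

lemma sum_bound {d : ℝ} (hd : 0 < d) {φ : ℝ → ℝ} {γ : ℤ × ℤ → ℂ}
    (hmono : ∀ s t : ℝ, 1 ≤ s → s ≤ t → φ t / t ≤ φ s / s)
    (hφ : ∀ p : ℤ × ℤ, ‖latticePt p - (d : ℂ) * γ p‖ ≤ φ (‖latticePt p‖))
    (hg0 : ∀ t : ℝ, 1 ≤ t → 0 ≤ φ t / t)
    {T : ℝ} (hT1 : 1 ≤ T) (hT : ∀ t, T ≤ t → φ t / t ≤ 1/2)
    (R : ℝ) (s : Finset (ℤ × ℤ)) :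
    ∑ p ∈ s, (if p ≠ (0, 0) ∧ ‖latticePt p‖ ≤ R then
        ‖(d : ℂ) / latticePt p - 1 / γ p‖ else 0) ≤
      (∑ p ∈ Finset.Icc (-(⌈T⌉₊:ℤ), -(⌈T⌉₊:ℤ)) ((⌈T⌉₊:ℤ), (⌈T⌉₊:ℤ)),
        ‖(d : ℂ) / latticePt p - 1 / γ p‖) +
      ∑ j ∈ Finset.range ⌊R⌋₊, 24 * d * (φ ((j:ℝ)+1) / ((j:ℝ)+1)) := by
  classical
  set term : ℤ × ℤ → ℝ := fun p => ‖(d : ℂ) / latticePt p - 1 / γ p‖ with hterm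
  set N := ⌊R⌋₊ with hN
  set M₀ : ℕ := ⌈T⌉₊ with hM₀
  set F₀ : Finset (ℤ × ℤ) := Finset.Icc (-(M₀:ℤ), -(M₀:ℤ)) ((M₀:ℤ), (M₀:ℤ)) with hF₀
  set cond : ℤ × ℤ → Prop := fun p => p ≠ (0, 0) ∧ ‖latticePt p‖ ≤ R with hcond
  have hstep1 : ∑ p ∈ s, (if cond p then term p else 0) = ∑ p ∈ s.filter cond, term p :=
    (Finset.sum_filter cond term).symm
  rw [hstep1]
  set s₁ := s.filter cond with hs₁
  have hsplit : ∑ p ∈ s₁, term p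
      = ∑ p ∈ s₁.filter (fun p => ‖latticePt p‖ < T), term p
      + ∑ p ∈ s₁.filter (fun p => ¬ ‖latticePt p‖ < T), term p :=
    (Finset.sum_filter_add_sum_filter_not s₁ _ term).symm
  rw [hsplit]
  have hsmall : ∑ p ∈ s₁.filter (fun p => ‖latticePt p‖ < T), term p
      ≤ ∑ p ∈ F₀, term p := by
    apply Finset.sum_le_sum_of_subset_of_nonneg
    · intro p hp
      rw [Finset.mem_filter] at hp
      obtain ⟨hp1, hp2⟩ := hp
      have : (maxN p : ℝ) < T := lt_of_le_of_lt (maxN_le_abs p) hp2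
      have hmle : (maxN p : ℝ) ≤ (M₀ : ℝ) := le_trans this.le (Nat.le_ceil T)
      have hm : maxN p ≤ M₀ := by exact_mod_cast hmle
      simp only [hF₀, Finset.mem_Icc, Prod.le_def]
      simp only [maxN] at hm
      omega
    · intro p _ _; exact norm_nonneg _
  have hbig : ∑ p ∈ s₁.filter (fun p => ¬ ‖latticePt p‖ < T), term p
      ≤ ∑ j ∈ Finset.range N, 24 * d * (φ ((j:ℝ)+1) / ((j:ℝ)+1)) := by
    set b : ℤ × ℤ → ℝ := fun p => 2 * d * (φ (maxN p) / (maxN p)) / (maxN p) with hb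
    set sbig := s₁.filter (fun p => ¬ ‖latticePt p‖ < T) with hsbig
    have hmem : ∀ p ∈ sbig, p ≠ (0,0) ∧ ‖latticePt p‖ ≤ R
        ∧ T ≤ ‖latticePt p‖ := by
      intro p hp
      rw [hsbig, Finset.mem_filter, hs₁, Finset.mem_filter] at hp
      exact ⟨hp.1.2.1, hp.1.2.2, not_lt.mp hp.2⟩
    have h1 : ∑ p ∈ sbig, term p ≤ ∑ p ∈ sbig, b p := by
      apply Finset.sum_le_sum
      intro p hp
      obtain ⟨hp0, hpR, hpT⟩ := hmem p hp
      exact term_bound hd hmono hφ hp0 (hT _ hpT)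
    set U := (Finset.range N).biUnion (fun j => shellF (j+1)) with hU
    have hbnn : ∀ p, p ≠ (0,0) → 0 ≤ b p := by
      intro p hp0
      have hj1 : (1:ℝ) ≤ (maxN p : ℝ) := by exact_mod_cast one_le_maxN hp0
      have := hg0 (maxN p) hj1
      have hjpos : (0:ℝ) < (maxN p : ℝ) := lt_of_lt_of_le zero_lt_one hj1
      rw [hb]
      apply div_nonneg (mul_nonneg (by positivity) this) hjpos.le
    have h2 : ∑ p ∈ sbig, b p ≤ ∑ p ∈ U, b p := by
      apply Finset.sum_le_sum_of_subset_of_nonneg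
      · intro p hp
        obtain ⟨hp0, hpR, hpT⟩ := hmem p hp
        have hm1 : 1 ≤ maxN p := one_le_maxN hp0
        have hmR : (maxN p : ℝ) ≤ R := le_trans (maxN_le_abs p) hpR
        have hmN : maxN p ≤ N := Nat.le_floor hmR
        rw [hU, Finset.mem_biUnion]
        refine ⟨maxN p - 1, ?_, ?_⟩
        · rw [Finset.mem_range]; omega
        · rw [mem_shellF]; omega
      · intro p hp _
        rw [hU, Finset.mem_biUnion] at hp
        obtain ⟨j, _, hj⟩ := hp
        rw [mem_shellF] at hj
        apply hbnn
        intro h0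
        rw [h0] at hj
        simp [maxN] at hj
    have hdisj : (↑(Finset.range N) : Set ℕ).PairwiseDisjoint (fun j => shellF (j+1)) := by
      intro i _ j _ hij
      simp only [Function.onFun]
      rw [Finset.disjoint_left]
      intro p hpi hpj
      rw [mem_shellF] at hpi hpj
      omega
    have h3 : ∑ p ∈ U, b p = ∑ j ∈ Finset.range N, ∑ p ∈ shellF (j+1), b p :=
      Finset.sum_biUnion hdisj
    have h4 : ∀ j ∈ Finset.range N, ∑ p ∈ shellF (j+1), b p
        ≤ 24 * d * (φ ((j:ℝ)+1) / ((j:ℝ)+1)) := by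
      intro j _
      have hconst : ∀ p ∈ shellF (j+1),
          b p = 2 * d * (φ ((j:ℝ)+1) / ((j:ℝ)+1)) / ((j:ℝ)+1) := by
        intro p hp
        rw [mem_shellF] at hp
        rw [hb]
        simp only [hp]
        push_cast
        ring_nf
      rw [Finset.sum_congr rfl hconst, Finset.sum_const, nsmul_eq_mul]
      have hcard : ((shellF (j+1)).card : ℝ) ≤ 12 * ((j:ℝ)+1) := by
        have := card_shellF (k := j+1) (by omega)
        calc ((shellF (j+1)).card : ℝ) ≤ ((12 * (j+1) : ℕ) : ℝ) := by exact_mod_cast this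
          _ = 12 * ((j:ℝ)+1) := by push_cast; ring
      have hj1 : (1:ℝ) ≤ (j:ℝ)+1 := by have := Nat.cast_nonneg (α:=ℝ) j; linarith
      have hcnn : 0 ≤ 2 * d * (φ ((j:ℝ)+1) / ((j:ℝ)+1)) / ((j:ℝ)+1) := by
        apply div_nonneg (mul_nonneg (by positivity) (hg0 _ hj1)) (by positivity)
      calc ((shellF (j+1)).card : ℝ) * (2 * d * (φ ((j:ℝ)+1) / ((j:ℝ)+1)) / ((j:ℝ)+1))
          ≤ (12 * ((j:ℝ)+1)) * (2 * d * (φ ((j:ℝ)+1) / ((j:ℝ)+1)) / ((j:ℝ)+1)) :=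
            mul_le_mul_of_nonneg_right hcard hcnn
        _ = 24 * d * (φ ((j:ℝ)+1) / ((j:ℝ)+1)) := by
            field_simp
            ring
    calc ∑ p ∈ sbig, term p ≤ ∑ p ∈ sbig, b p := h1
      _ ≤ ∑ p ∈ U, b p := h2
      _ = ∑ j ∈ Finset.range N, ∑ p ∈ shellF (j+1), b p := h3
      _ ≤ ∑ j ∈ Finset.range N, 24 * d * (φ ((j:ℝ)+1) / ((j:ℝ)+1)) :=
          Finset.sum_le_sum h4
  exact add_le_add hsmall hbig


/-- Lemma 2.1(c): the partial sums S(R) = Σ_{0<|λ_{mn}|≤R} |d/λ_{mn} − 1/γ_{mn}|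
satisfy S(R) = o(R) as R → ∞. -/
theorem dRegular_partial_sums_littleO (d : ℝ) (hd : 0 < d) (γ : ℤ × ℤ → ℂ)
    (hΓ : DRegular d γ) :
    Filter.Tendsto
      (fun R : ℝ =>
        (∑' p : ℤ × ℤ,
          if p ≠ (0, 0) ∧ ‖latticePt p‖ ≤ R then
            ‖(d : ℂ) / latticePt p - 1 / γ p‖
          else 0) / R)
      Filter.atTop (nhds 0) := by
  classical
  obtain ⟨c, hc, φ, hmono, hint, hφ, hsep⟩ := hΓ
  have hpos : ∀ n : ℕ, 1 ≤ n → 0 ≤ φ n := by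
    intro n hn
    have h1 := hφ ((n : ℤ), 0)
    rw [abs_latticePt_nat n] at h1
    exact le_trans (norm_nonneg _) h1
  have hg0 : ∀ t : ℝ, 1 ≤ t → 0 ≤ φ t / t := phi_div_nonneg hmono hpos
  have hglim := phi_div_tendsto hmono hint
  obtain ⟨T, hT1, hT⟩ := hglim (1/2) (by norm_num)
  set C₀ : ℝ := ∑ p ∈ Finset.Icc (-(⌈T⌉₊:ℤ), -(⌈T⌉₊:ℤ)) ((⌈T⌉₊:ℤ), (⌈T⌉₊:ℤ)),
      ‖(d : ℂ) / latticePt p - 1 / γ p‖ with hC₀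
  have hC₀nn : 0 ≤ C₀ := Finset.sum_nonneg (fun p _ => norm_nonneg _)
  set u : ℕ → ℝ := fun j => φ ((j:ℝ)+1) / ((j:ℝ)+1) with hu_def
  have hunn : ∀ j, 0 ≤ u j := by
    intro j
    apply hg0
    have := Nat.cast_nonneg (α := ℝ) j
    linarith
  have hu : Tendsto u atTop (nhds 0) := by
    rw [Metric.tendsto_atTop]
    intro ε hε
    obtain ⟨T', hT'1, hT'⟩ := hglim (ε/2) (by linarith)
    refine ⟨⌈T'⌉₊, fun n hn => ?_⟩
    have h1 : T' ≤ (n:ℝ) + 1 := by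
      have h2 : T' ≤ (⌈T'⌉₊ : ℝ) := Nat.le_ceil T'
      have h3 : ((⌈T'⌉₊ : ℕ) : ℝ) ≤ (n : ℝ) := by exact_mod_cast hn
      linarith
    have h4 : u n ≤ ε/2 := hT' _ h1
    have h5 : 0 ≤ u n := hunn n
    rw [Real.dist_eq, sub_zero, _root_.abs_of_nonneg h5]
    linarith
  have hces : Tendsto (fun n : ℕ => ((n:ℝ))⁻¹ * ∑ j ∈ Finset.range n, u j) atTop (nhds 0) :=
    hu.cesaro
  have hcesR : Tendsto (fun R : ℝ => ((⌊R⌋₊:ℝ))⁻¹ * ∑ j ∈ Finset.range ⌊R⌋₊, u j)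
      atTop (nhds 0) := hces.comp tendsto_nat_floor_atTop
  set G : ℝ → ℝ := fun R => C₀ * R⁻¹ +
      24 * d * (((⌊R⌋₊:ℝ))⁻¹ * ∑ j ∈ Finset.range ⌊R⌋₊, u j) with hGdef
  have hG : Tendsto G atTop (nhds 0) := by
    have h1 : Tendsto (fun R : ℝ => C₀ * R⁻¹) atTop (nhds 0) := by
      have := tendsto_inv_atTop_zero.const_mul C₀
      simpa using this
    have h2 := hcesR.const_mul (24 * d)
    rw [mul_zero] at h2
    have := h1.add h2
    simpa using this
  apply squeeze_zero' ?h0 ?h1 hG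
  case h0 =>
    filter_upwards [eventually_ge_atTop (1:ℝ)] with R hR
    apply div_nonneg ?_ (by linarith)
    apply tsum_nonneg
    intro p
    split
    · exact norm_nonneg _
    · exact le_refl 0
  case h1 =>
    filter_upwards [eventually_ge_atTop (1:ℝ)] with R hR
    have hRpos : (0:ℝ) < R := by linarith
    set N := ⌊R⌋₊ with hN
    have hN1 : 1 ≤ N := Nat.le_floor (by exact_mod_cast hR)
    have hNpos : (0:ℝ) < (N:ℝ) := by exact_mod_cast hN1
    have hNR : (N:ℝ) ≤ R := Nat.floor_le hRpos.le
    have hsumnn : 0 ≤ ∑ j ∈ Finset.range N, u j :=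
      Finset.sum_nonneg (fun j _ => hunn j)
    have hrhs_eq : ∀ n : ℕ, ∑ j ∈ Finset.range n, 24 * d * (φ ((j:ℝ)+1) / ((j:ℝ)+1))
        = 24 * d * ∑ j ∈ Finset.range n, u j := by
      intro n
      rw [Finset.mul_sum]
    have hbound : (∑' p : ℤ × ℤ,
          if p ≠ (0, 0) ∧ ‖latticePt p‖ ≤ R then
            ‖(d : ℂ) / latticePt p - 1 / γ p‖
          else 0) ≤ C₀ + 24 * d * ∑ j ∈ Finset.range N, u j := by
      apply tsum_le_of_sum_le'
      · have : 0 ≤ 24 * d * ∑ j ∈ Finset.range N, u j := by positivity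
        linarith
      · intro s
        have := sum_bound hd hmono hφ hg0 hT1 hT R s
        rw [hrhs_eq] at this
        exact this
    calc (∑' p : ℤ × ℤ,
          if p ≠ (0, 0) ∧ ‖latticePt p‖ ≤ R then
            ‖(d : ℂ) / latticePt p - 1 / γ p‖
          else 0) / R
        ≤ (C₀ + 24 * d * ∑ j ∈ Finset.range N, u j) / R := by gcongr
      _ = C₀ / R + (24 * d * ∑ j ∈ Finset.range N, u j) / R := add_div _ _ _
      _ ≤ C₀ / R + (24 * d * ∑ j ∈ Finset.range N, u j) / (N:ℝ) := by gcongr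
      _ = G R := by
          rw [hGdef]
          rw [div_eq_mul_inv, div_eq_mul_inv]
          ring
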